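/- Fix x ∈ X and assume the map s ↦ σ_s(x) from S to X is finite-to-one. Then the left regular orbit cocycle μ_x, defined by μ_x(t, y) = ‖Q^⊥ ξ_{t+u}‖ / ‖Q^⊥ ξ_u‖ whenever y = σ_u(x), is well defined (independent of the choice of u with σ_u(x) = y), satisfies μ_x(t, y) > 0 for all t ∈ S and y ∈ S(x), and is an orbit cocycle at x: (1) for every t ∈ S and y ∈ S(x), ∑_{y' ∈ S(x), σ_t(y') = σ_t(y)} μ_x(t, y')² ≤ 1, and (2) μ_x(s+t, y) = μ_x(t, y) μ_x(s, σ_t(y)) for all s, t ∈ S and y ∈ S(x). -/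

import Mathlib

section aux

variable {S : Type} [DecidableEq S] {X : Type} [TopologicalSpace X]

private lemma aux_single_on : Orthonormal ℂ (fun s : S => lp.single 2 s (1 : ℂ)) := by
  rw [orthonormal_iff_ite]
  intro i j
  rw [lp.inner_single_left, RCLike.inner_apply, map_one, mul_one]
  by_cases h : i = j
  · subst h; rw [lp.single_apply_self, if_pos rfl]
  · rw [lp.single_apply_ne 2 j 1 h, if_neg h]

private lemma aux_inner_sum (E : Finset S) (r : S) :
    (inner ℂ (∑ s ∈ E, lp.single 2 s (1:ℂ)) (lp.single 2 r (1:ℂ)) : ℂ)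
      = if r ∈ E then 1 else 0 := by
  rw [sum_inner]
  have h := orthonormal_iff_ite.1 (aux_single_on (S := S))
  simp only [h]
  exact Finset.sum_ite_eq' E r (fun _ => 1)

private lemma aux_norm_sum (E : Finset S) :
    ‖∑ s ∈ E, lp.single 2 s (1:ℂ)‖ = Real.sqrt E.card := by
  have h := lp.norm_sum_single (p := 2) (by norm_num) (fun _ : S => (1:ℂ)) E
  simp only [norm_one, ENNReal.toReal_ofNat, Real.one_rpow, Finset.sum_const,
    nsmul_eq_mul, mul_one] at h
  rw [Real.rpow_two] at h
  rw [← Real.sqrt_sq (norm_nonneg _), h]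

/-- Key computation: `Q^⊥ ξ_u` has norm `1/√|E_{σ_u(x)}|`. -/
private lemma aux_key
    (σ : S → C(X, X)) (x : X)
    (hfin : ∀ y : X, {s : S | (σ s) x = y}.Finite)
    (Q : lp (fun _ : S => ℂ) 2 →L[ℂ] lp (fun _ : S => ℂ) 2)
    (hQmem : ∀ η : lp (fun _ : S => ℂ) 2,
      Q η ∈ (Submodule.span ℂ {v : lp (fun _ : S => ℂ) 2 | ∃ s t : S,
        (σ s) x = (σ t) x ∧ v = lp.single 2 s (1 : ℂ) - lp.single 2 t (1 : ℂ)}).topologicalClosure)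
    (hQorth : ∀ (η : lp (fun _ : S => ℂ) 2),
      ∀ v ∈ (Submodule.span ℂ {v : lp (fun _ : S => ℂ) 2 | ∃ s t : S,
        (σ s) x = (σ t) x ∧ v = lp.single 2 s (1 : ℂ) - lp.single 2 t (1 : ℂ)}).topologicalClosure,
      inner ℂ (η - Q η) v = (0 : ℂ))
    (u : S) :
    ‖lp.single 2 u (1 : ℂ) - Q (lp.single 2 u (1 : ℂ))‖
      = (Real.sqrt ((hfin ((σ u) x)).toFinset.card))⁻¹ := by
  classical
  set H := (Submodule.span ℂ {v : lp (fun _ : S => ℂ) 2 | ∃ s t : S,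
      (σ s) x = (σ t) x ∧ v = lp.single 2 s (1 : ℂ) - lp.single 2 t (1 : ℂ)}).topologicalClosure
    with hH
  set E := (hfin ((σ u) x)).toFinset with hE
  have hmemE : ∀ r : S, r ∈ E ↔ (σ r) x = (σ u) x := by
    intro r; simp [hE]
  have huE : u ∈ E := (hmemE u).2 rfl
  have hcard : 0 < E.card := Finset.card_pos.2 ⟨u, huE⟩
  set w : lp (fun _ : S => ℂ) 2 := ∑ s ∈ E, lp.single 2 s (1 : ℂ) with hw
  set c : lp (fun _ : S => ℂ) 2 := ((E.card : ℂ))⁻¹ • w with hc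
  -- c is orthogonal to H
  have hcorth : ∀ v ∈ H, (inner ℂ c v : ℂ) = 0 := by
    have hker : H ≤ (innerSL ℂ c).ker := by
      rw [hH]
      refine Submodule.topologicalClosure_minimal _ (Submodule.span_le.2 ?_)
        (ContinuousLinearMap.isClosed_ker _)
      rintro v ⟨a, b, hab, rfl⟩
      have haE : a ∈ E ↔ b ∈ E := by
        rw [hmemE, hmemE, hab]
      simp only [SetLike.mem_coe, LinearMap.mem_ker, ContinuousLinearMap.coe_coe, innerSL_apply_apply]
      rw [hc, inner_smul_left, inner_sub_right, aux_inner_sum, aux_inner_sum]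
      by_cases h : a ∈ E
      · rw [if_pos h, if_pos (haE.1 h), sub_self, mul_zero]
      · rw [if_neg h, if_neg (fun hb => h (haE.2 hb)), sub_self, mul_zero]
    intro v hv
    exact hker hv
  -- ξ_u - c belongs to H
  have hmemH : lp.single 2 u (1:ℂ) - c ∈ H := by
    have heq : lp.single 2 u (1:ℂ) - c
        = ((E.card : ℂ))⁻¹ • ∑ s ∈ E, (lp.single 2 u (1:ℂ) - lp.single 2 s (1:ℂ)) := by
      rw [Finset.sum_sub_distrib, Finset.sum_const, smul_sub, ← Nat.cast_smul_eq_nsmul ℂ,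
        smul_smul, inv_mul_cancel₀ (by exact_mod_cast hcard.ne'), one_smul, hc, hw]
    rw [heq]
    refine Submodule.smul_mem _ _ (Submodule.sum_mem _ fun s hs => ?_)
    exact Submodule.le_topologicalClosure _
      (Submodule.subset_span ⟨u, s, ((hmemE s).1 hs).symm, rfl⟩)
  -- the difference d is zero
  have hQu := hQmem (lp.single 2 u (1:ℂ))
  set d := (lp.single 2 u (1:ℂ) - Q (lp.single 2 u (1:ℂ))) - c with hd
  have hdH : d ∈ H := by
    have : d = (lp.single 2 u (1:ℂ) - c) - Q (lp.single 2 u (1:ℂ)) := by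
      rw [hd, sub_right_comm]
    rw [this]
    exact Submodule.sub_mem _ hmemH hQu
  have hdperp : (inner ℂ d d : ℂ) = 0 := by
    rw [hd, inner_sub_left, hQorth _ _ hdH, hcorth _ hdH, sub_zero]
  have hd0 : lp.single 2 u (1:ℂ) - Q (lp.single 2 u (1:ℂ)) = c :=
    sub_eq_zero.1 (inner_self_eq_zero.1 hdperp)
  -- compute the norm of c
  rw [hd0, hc, norm_smul, hw, aux_norm_sum]
  have hcast : (0:ℝ) < (E.card : ℝ) := by exact_mod_cast hcard
  have hs : Real.sqrt E.card ≠ 0 := (Real.sqrt_pos.2 hcast).ne'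
  have hnorm : ‖((E.card : ℂ))⁻¹‖ = ((E.card : ℝ))⁻¹ := by
    rw [norm_inv, Complex.norm_natCast]
  rw [hnorm]
  field_simp
  rw [Real.sq_sqrt hcast.le]

end aux

/-- the left regular orbit cocycle `μ_x(t, y) = ‖Q^⊥ξ_{t+u}‖/‖Q^⊥ξ_u‖`
(for `y = σ_u(x)`) is well defined, strictly positive, and an orbit cocycle at `x`. -/
theorem left_regular_orbit_cocycle
    {S : Type} [AddCancelCommMonoid S] [Countable S] [DecidableEq S]
    {X : Type} [MetricSpace X] [CompactSpace X] [Nonempty X]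
    (σ : S → C(X, X))
    (hσ0 : σ 0 = ContinuousMap.id X)
    (hσadd : ∀ s t : S, σ (s + t) = (σ s).comp (σ t))
    (hσsurj : ∀ s : S, Function.Surjective (σ s))
    (x : X)
    -- the map s ↦ σ_s(x) is finite-to-one
    (hfin : ∀ y : X, {s : S | (σ s) x = y}.Finite)
    -- the action of S on the orbit S(x)
    (στ : S → {y : X // ∃ s : S, (σ s) x = y} → {y : X // ∃ s : S, (σ s) x = y})
    (hστ : ∀ (t : S) (y : {y : X // ∃ s : S, (σ s) x = y}), (στ t y : X) = (σ t) (y : X))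
    -- Q is the orthogonal projection of ℓ²(S) onto H₀
    (Q : lp (fun _ : S => ℂ) 2 →L[ℂ] lp (fun _ : S => ℂ) 2)
    (hQmem : ∀ η : lp (fun _ : S => ℂ) 2,
      Q η ∈ (Submodule.span ℂ {v : lp (fun _ : S => ℂ) 2 | ∃ s t : S,
        (σ s) x = (σ t) x ∧ v = lp.single 2 s (1 : ℂ) - lp.single 2 t (1 : ℂ)}).topologicalClosure)
    (hQfix : ∀ η ∈ (Submodule.span ℂ {v : lp (fun _ : S => ℂ) 2 | ∃ s t : S,
        (σ s) x = (σ t) x ∧ v = lp.single 2 s (1 : ℂ) - lp.single 2 t (1 : ℂ)}).topologicalClosure,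
      Q η = η)
    (hQorth : ∀ (η : lp (fun _ : S => ℂ) 2),
      ∀ v ∈ (Submodule.span ℂ {v : lp (fun _ : S => ℂ) 2 | ∃ s t : S,
        (σ s) x = (σ t) x ∧ v = lp.single 2 s (1 : ℂ) - lp.single 2 t (1 : ℂ)}).topologicalClosure,
      inner ℂ (η - Q η) v = (0 : ℂ)) :
    -- there is a well-defined left regular orbit cocycle, and it is a strictly positive
    -- orbit cocycle at x
    ∃ μx : S → {y : X // ∃ s : S, (σ s) x = y} → ℝ,
      (∀ (t u : S),
        μx t ⟨(σ u) x, ⟨u, rfl⟩⟩ =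
          ‖lp.single 2 (t + u) (1 : ℂ) - Q (lp.single 2 (t + u) (1 : ℂ))‖ /
            ‖lp.single 2 u (1 : ℂ) - Q (lp.single 2 u (1 : ℂ))‖) ∧
      (∀ (t : S) (y : {y : X // ∃ s : S, (σ s) x = y}), 0 < μx t y) ∧
      (∀ (t : S) (y : {y : X // ∃ s : S, (σ s) x = y})
        (F : Finset {y' : {y : X // ∃ s : S, (σ s) x = y} // (σ t) (y' : X) = (σ t) (y : X)}),
        ∑ y' ∈ F, (μx t (y' : {y : X // ∃ s : S, (σ s) x = y})) ^ 2 ≤ 1) ∧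
      (∀ (s t : S) (y : {y : X // ∃ s : S, (σ s) x = y}),
        μx (s + t) y = μx t y * μx s (στ t y)) := by
  classical
  set n : X → ℕ := fun y => (hfin y).toFinset.card with hn
  have hnorm : ∀ u : S, ‖lp.single 2 u (1 : ℂ) - Q (lp.single 2 u (1 : ℂ))‖
      = (Real.sqrt (n ((σ u) x)))⁻¹ := fun u => aux_key σ x hfin Q hQmem hQorth u
  have hnpos : ∀ y : X, (∃ s : S, (σ s) x = y) → 0 < n y := by
    rintro y ⟨s, hs⟩
    exact Finset.card_pos.2 ⟨s, by simp [hn, hs]⟩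
  have happ : ∀ (s t : S) (z : X), (σ (s + t)) z = (σ s) ((σ t) z) := by
    intro s t z; rw [hσadd]; rfl
  have horb : ∀ (t : S) (y : {y : X // ∃ s : S, (σ s) x = y}), ∃ s : S, (σ s) x = (σ t) y.1 := by
    rintro t ⟨y, s, hs⟩
    exact ⟨t + s, by rw [happ, hs]⟩
  refine ⟨fun t y => Real.sqrt ((n y.1 : ℝ) / (n ((σ t) y.1) : ℝ)), ?_, ?_, ?_, ?_⟩
  · -- well-definedness formula
    intro t u
    rw [hnorm, hnorm]
    simp only
    rw [happ t u x]
    have ha : (0:ℝ) < (n ((σ u) x) : ℝ) := by exact_mod_cast hnpos _ ⟨u, rfl⟩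
    have hb : (0:ℝ) < (n ((σ t) ((σ u) x)) : ℝ) := by
      exact_mod_cast hnpos _ ⟨t + u, by rw [happ]⟩
    rw [Real.sqrt_div ha.le, inv_div_inv]
  · -- positivity
    intro t y
    have ha : (0:ℝ) < (n y.1 : ℝ) := by exact_mod_cast hnpos _ y.2
    have hb : (0:ℝ) < (n ((σ t) y.1) : ℝ) := by exact_mod_cast hnpos _ (horb t y)
    exact Real.sqrt_pos.2 (div_pos ha hb)
  · -- summability bound
    intro t y F
    have hNpos : (0:ℝ) < (n ((σ t) y.1) : ℝ) := by exact_mod_cast hnpos _ (horb t y)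
    have hterm : ∀ y' ∈ F,
        Real.sqrt ((n (y' : {y : X // ∃ s : S, (σ s) x = y}).1 : ℝ) /
          (n ((σ t) (y' : {y : X // ∃ s : S, (σ s) x = y}).1) : ℝ)) ^ 2
        = (n (y' : {y : X // ∃ s : S, (σ s) x = y}).1 : ℝ) / (n ((σ t) y.1) : ℝ) := by
      intro y' _
      rw [y'.2, Real.sq_sqrt (by positivity)]
    rw [Finset.sum_congr rfl hterm, ← Finset.sum_div, div_le_one hNpos]
    have hnat : (∑ y' ∈ F, n (y' : {y : X // ∃ s : S, (σ s) x = y}).1) ≤ n ((σ t) y.1) := by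
      have hdisj : ∀ a ∈ F, ∀ b ∈ F, a ≠ b →
          Disjoint ((hfin (a : {y : X // ∃ s : S, (σ s) x = y}).1).toFinset)
            ((hfin (b : {y : X // ∃ s : S, (σ s) x = y}).1).toFinset) := by
        intro a _ b _ hab
        refine Finset.disjoint_left.2 fun r hra hrb => hab ?_
        have h1 : (σ r) x = (a : {y : X // ∃ s : S, (σ s) x = y}).1 := by simpa using hra
        have h2 : (σ r) x = (b : {y : X // ∃ s : S, (σ s) x = y}).1 := by simpa using hrb
        exact Subtype.ext (Subtype.ext (h1.symm.trans h2))
      calc (∑ y' ∈ F, n (y' : {y : X // ∃ s : S, (σ s) x = y}).1)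
          = (F.biUnion fun y' => (hfin (y' : {y : X // ∃ s : S, (σ s) x = y}).1).toFinset).card :=
            (Finset.card_biUnion hdisj).symm
        _ ≤ n ((σ t) y.1) := by
            refine Finset.card_le_card_of_injOn (fun r => t + r) ?_ ?_
            · intro r hr
              simp only [Finset.mem_coe, Finset.mem_biUnion] at hr
              obtain ⟨y', hy', hry⟩ := hr
              have hrx : (σ r) x = (y' : {y : X // ∃ s : S, (σ s) x = y}).1 := by simpa using hry
              simp only [Finset.mem_coe, Set.Finite.mem_toFinset, Set.mem_setOf_eq]
              rw [happ, hrx, y'.2]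
            · intro a _ b _ hab
              exact add_left_cancel hab
    exact_mod_cast hnat
  · -- cocycle identity
    intro s t y
    have hb : (0:ℝ) < (n ((σ t) y.1) : ℝ) := by exact_mod_cast hnpos _ (horb t y)
    have hc : (0:ℝ) < (n ((σ s) ((σ t) y.1)) : ℝ) := by
      obtain ⟨r, hr⟩ := horb t y
      exact_mod_cast hnpos _ ⟨s + r, by rw [happ, hr]⟩
    have ha : (0:ℝ) ≤ (n y.1 : ℝ) := by positivity
    beta_reduce
    rw [hστ t y, happ s t y.1, ← Real.sqrt_mul (div_nonneg ha hb.le)]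
    rw [div_mul_div_cancel₀ hb.ne']
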